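/- arXiv:1601.07068 — 9 statements merged into one kernel-verified Lean document; each statement's English description precedes it below -/
import Mathlib

section
/- For all i ≥ 0, the residual gap of the finite-precision classical CG recurrences is the accumulated sum of local rounding errors: f_{i+1} = f_0 − Σ_{j=0}^{i} (A δ^x_j + δ^r_j). -/
/-- For all `i ≥ 0`, the residual gap of the finite-precision classical CG
recurrences is the accumulated sum of local rounding errors:
`f (i+1) = f 0 - Σ_{j=0}^{i} (A (δx j) + δr j)`. -/
theorem cg_residual_gap_sum
    {E : Type*} [NormedAddCommGroup E] [NormedSpace ℝ E]
    (A : E →L[ℝ] E) (b : E)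
    (x r p δx δr f : ℕ → E) (α : ℕ → ℝ)
    (hx : ∀ i, x (i + 1) = x i + α i • p i + δx i)
    (hr : ∀ i, r (i + 1) = r i - α i • (A (p i)) + δr i)
    (hf : ∀ i, f i = (b - A (x i)) - r i) :
    ∀ i, f (i + 1) = f 0 - ∑ j ∈ Finset.range (i + 1), (A (δx j) + δr j) := by
  have step : ∀ i, f (i + 1) = f i - (A (δx i) + δr i) := by
    intro i
    rw [hf, hf, hx i, hr i]
    simp [map_add, map_smul, map_sub]
    abel
  intro i
  induction i with
  | zero => simp [step 0]
  | succ n ih =>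
      rw [step (n + 1), Finset.sum_range_succ _ (n + 1), ih]
      abel
end

section
/- For all i ≥ 0, the norm of the residual gap of the finite-precision classical CG recurrences satisfies ‖f_{i+1}‖ ≤ ‖f_0‖ + Σ_{j=0}^{i} ‖A δ^x_j + δ^r_j‖; in particular ‖f_{i+1}‖ ≤ ‖f_i‖ + ‖A δ^x_i + δ^r_i‖. -/
/-- For all `i ≥ 0`, the norm of the residual gap of the finite-precision
classical CG recurrences satisfies
`‖f (i+1)‖ ≤ ‖f 0‖ + Σ_{j=0}^{i} ‖A (δx j) + δr j‖`;
in particular `‖f (i+1)‖ ≤ ‖f i‖ + ‖A (δx i) + δr i‖`. -/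
theorem cg_residual_gap_norm_bound
    {E : Type*} [NormedAddCommGroup E] [NormedSpace ℝ E]
    (A : E →L[ℝ] E) (b : E)
    (x r p δx δr f : ℕ → E) (α : ℕ → ℝ)
    (hx : ∀ i, x (i + 1) = x i + α i • p i + δx i)
    (hr : ∀ i, r (i + 1) = r i - α i • (A (p i)) + δr i)
    (hf : ∀ i, f i = (b - A (x i)) - r i) :
    ∀ i, ‖f (i + 1)‖ ≤ ‖f 0‖ + ∑ j ∈ Finset.range (i + 1), ‖A (δx j) + δr j‖ ∧
      ‖f (i + 1)‖ ≤ ‖f i‖ + ‖A (δx i) + δr i‖ := by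
  have key : ∀ i, f (i + 1) = f i - (A (δx i) + δr i) := by
    intro i
    rw [hf, hf, hx, hr]
    simp [map_add, map_smul]
    abel
  have step : ∀ i, ‖f (i + 1)‖ ≤ ‖f i‖ + ‖A (δx i) + δr i‖ := by
    intro i
    rw [key i]
    exact norm_sub_le _ _
  intro i
  refine ⟨?_, step i⟩
  induction i with
  | zero => simpa using step 0
  | succ n ih =>
    calc ‖f (n + 2)‖ ≤ ‖f (n + 1)‖ + ‖A (δx (n + 1)) + δr (n + 1)‖ := step (n + 1)
      _ ≤ (‖f 0‖ + ∑ j ∈ Finset.range (n + 1), ‖A (δx j) + δr j‖) + ‖A (δx (n + 1)) + δr (n + 1)‖ := by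
          linarith
      _ = ‖f 0‖ + ∑ j ∈ Finset.range (n + 2), ‖A (δx j) + δr j‖ := by
          rw [Finset.sum_range_succ _ (n + 1), add_assoc]
end

section
/- For all i ≥ 1, the norms of the residual gap and auxiliary gap of the finite-precision Chronopoulos/Gear CG recurrences satisfy the coupled bounds ‖f_{i+1}‖ ≤ ‖f_i‖ + |α_i β_i|·‖g_{i−1}‖ + ‖A δ^x_i + δ^r_i‖ + |α_i|·‖A δ^p_i − δ^s_i‖ and ‖g_i‖ ≤ |β_i|·‖g_{i−1}‖ + ‖A δ^p_i − δ^s_i‖. -/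
/-- For all `i ≥ 1`, the norms of the residual gap and the auxiliary gap of the
finite-precision Chronopoulos/Gear CG recurrences satisfy the coupled bounds
`‖f (i+1)‖ ≤ ‖f i‖ + |α i β i| ‖g (i-1)‖ + ‖A (δx i) + δr i‖ + |α i| ‖A (δp i) - δs i‖`
and `‖g i‖ ≤ |β i| ‖g (i-1)‖ + ‖A (δp i) - δs i‖`. -/
theorem cgcg_coupled_norm_bounds
    {E : Type*} [NormedAddCommGroup E] [NormedSpace ℝ E]
    (A : E →L[ℝ] E) (b : E)
    (x r p s u δx δr δp δs f g : ℕ → E) (α β : ℕ → ℝ)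
    (hx : ∀ i, x (i + 1) = x i + α i • p i + δx i)
    (hr : ∀ i, r (i + 1) = r i - α i • s i + δr i)
    (hp : ∀ i, p (i + 1) = u (i + 1) + β (i + 1) • p i + δp (i + 1))
    (hs : ∀ i, s (i + 1) = A (u (i + 1)) + β (i + 1) • s i + δs (i + 1))
    (hg : ∀ i, g i = A (p i) - s i)
    (hf : ∀ i, f i = (b - A (x i)) - r i) :
    ∀ i, ‖f (i + 2)‖ ≤ ‖f (i + 1)‖ + |α (i + 1) * β (i + 1)| * ‖g i‖ +
        ‖A (δx (i + 1)) + δr (i + 1)‖ + |α (i + 1)| * ‖A (δp (i + 1)) - δs (i + 1)‖ ∧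
      ‖g (i + 1)‖ ≤ |β (i + 1)| * ‖g i‖ + ‖A (δp (i + 1)) - δs (i + 1)‖ := by
  intro i
  have hgrec : g (i + 1) = β (i + 1) • g i + (A (δp (i + 1)) - δs (i + 1)) := by
    rw [hg, hg, hp, hs]
    simp only [map_add, map_smul]
    module
  have hfrec : f (i + 2) = f (i + 1) - (A (δx (i + 1)) + δr (i + 1))
      - (α (i + 1) * β (i + 1)) • g i - α (i + 1) • (A (δp (i + 1)) - δs (i + 1)) := by
    have h1 : f (i + 2) = f (i + 1) - (A (δx (i + 1)) + δr (i + 1))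
        - α (i + 1) • g (i + 1) := by
      rw [hf, hf, hg, hx (i + 1), hr (i + 1)]
      simp only [map_add, map_smul]
      module
    rw [h1, hgrec]
    module
  constructor
  · rw [hfrec]
    have h2 := norm_sub_le (f (i + 1) - (A (δx (i + 1)) + δr (i + 1))
        - (α (i + 1) * β (i + 1)) • g i) (α (i + 1) • (A (δp (i + 1)) - δs (i + 1)))
    have h3 := norm_sub_le (f (i + 1) - (A (δx (i + 1)) + δr (i + 1)))
        ((α (i + 1) * β (i + 1)) • g i)
    have h4 := norm_sub_le (f (i + 1)) (A (δx (i + 1)) + δr (i + 1))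
    rw [norm_smul, Real.norm_eq_abs] at h2 h3
    linarith
  · rw [hgrec]
    have := norm_add_le (β (i + 1) • g i) (A (δp (i + 1)) - δs (i + 1))
    rw [norm_smul, Real.norm_eq_abs] at this
    linarith
end

section
/- For all i ≥ 1, the four gaps of the finite-precision pipelined CG recurrences satisfy the coupled system f_{i+1} = f_i − α_i β_i g_{i−1} − α_i h_i − A δ^x_i − δ^r_i − α_i (A δ^p_i − δ^s_i), g_i = β_i g_{i−1} + h_i + (A δ^p_i − δ^s_i), h_{i+1} = h_i − α_i β_i j_{i−1} + A δ^u_i − δ^w_i − α_i (A δ^q_i − δ^z_i), and j_i = β_i j_{i−1} + (A δ^q_i − δ^z_i). -/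
/-- For all `i ≥ 1`, the four gaps of the finite-precision pipelined CG
recurrences satisfy the coupled system
`f (i+1) = f i - α i β i • g (i-1) - α i • h i - A (δx i) - δr i - α i • (A (δp i) - δs i)`,
`g i = β i • g (i-1) + h i + (A (δp i) - δs i)`,
`h (i+1) = h i - α i β i • j (i-1) + A (δu i) - δw i - α i • (A (δq i) - δz i)`, and
`j i = β i • j (i-1) + (A (δq i) - δz i)`. -/
theorem pipecg_coupled_system
    {E : Type*} [NormedAddCommGroup E] [NormedSpace ℝ E]
    (A : E →L[ℝ] E) (b : E)
    (x r p s w u z q m δx δr δw δu δp δs δz δq f g h j : ℕ → E) (α β : ℕ → ℝ)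
    (hx : ∀ i, x (i + 1) = x i + α i • p i + δx i)
    (hr : ∀ i, r (i + 1) = r i - α i • s i + δr i)
    (hw : ∀ i, w (i + 1) = w i - α i • z i + δw i)
    (hu : ∀ i, u (i + 1) = u i - α i • q i + δu i)
    (hp : ∀ i, p (i + 1) = u (i + 1) + β (i + 1) • p i + δp (i + 1))
    (hs : ∀ i, s (i + 1) = w (i + 1) + β (i + 1) • s i + δs (i + 1))
    (hz : ∀ i, z (i + 1) = A (m (i + 1)) + β (i + 1) • z i + δz (i + 1))
    (hq : ∀ i, q (i + 1) = m (i + 1) + β (i + 1) • q i + δq (i + 1))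
    (hf : ∀ i, f i = (b - A (x i)) - r i)
    (hg : ∀ i, g i = A (p i) - s i)
    (hh : ∀ i, h i = A (u i) - w i)
    (hj : ∀ i, j i = A (q i) - z i) :
    ∀ i,
      f (i + 2) = f (i + 1) - (α (i + 1) * β (i + 1)) • g i - α (i + 1) • h (i + 1) -
          A (δx (i + 1)) - δr (i + 1) - α (i + 1) • (A (δp (i + 1)) - δs (i + 1)) ∧
      g (i + 1) = β (i + 1) • g i + h (i + 1) + (A (δp (i + 1)) - δs (i + 1)) ∧
      h (i + 2) = h (i + 1) - (α (i + 1) * β (i + 1)) • j i +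
          A (δu (i + 1)) - δw (i + 1) - α (i + 1) • (A (δq (i + 1)) - δz (i + 1)) ∧
      j (i + 1) = β (i + 1) • j i + (A (δq (i + 1)) - δz (i + 1)) := by
  intro i
  have hg' : g (i+1) = β (i+1) • g i + h (i+1) + (A (δp (i+1)) - δs (i+1)) := by
    rw [hg, hg, hh, hp, hs]
    simp only [map_add, map_smul]
    module
  have hj' : j (i+1) = β (i+1) • j i + (A (δq (i+1)) - δz (i+1)) := by
    rw [hj, hj, hq, hz]
    simp only [map_add, map_smul]
    module
  refine ⟨?_, hg', ?_, hj'⟩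
  · rw [hf (i+2), hf (i+1), hx (i+1), hr (i+1), hp i, hs i, hg, hh]
    simp only [map_add, map_smul, map_sub]
    module
  · rw [hh (i+2), hh (i+1), hu (i+1), hw (i+1), hq i, hz i, hj]
    simp only [map_add, map_smul, map_sub]
    module
end

section
/- For all i ≥ 1, the norms of the four gaps of the finite-precision pipelined CG recurrences satisfy the coupled bounds ‖f_{i+1}‖ ≤ ‖f_i‖ + |α_i β_i|·‖g_{i−1}‖ + |α_i|·‖h_i‖ + ‖A δ^x_i + δ^r_i‖ + |α_i|·‖A δ^p_i − δ^s_i‖; ‖g_i‖ ≤ |β_i|·‖g_{i−1}‖ + ‖h_i‖ + ‖A δ^p_i − δ^s_i‖; ‖h_{i+1}‖ ≤ ‖h_i‖ + |α_i β_i|·‖j_{i−1}‖ + ‖A δ^u_i − δ^w_i‖ + |α_i|·‖A δ^q_i − δ^z_i‖; and ‖j_i‖ ≤ |β_i|·‖j_{i−1}‖ + ‖A δ^q_i − δ^z_i‖. -/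
private lemma norm_sub₅_le {E : Type*} [NormedAddCommGroup E] (a b c d e : E) :
    ‖a - b - c - d - e‖ ≤ ‖a‖ + ‖b‖ + ‖c‖ + ‖d‖ + ‖e‖ := by
  calc ‖a - b - c - d - e‖ ≤ ‖a - b - c - d‖ + ‖e‖ := norm_sub_le _ _
    _ ≤ ‖a - b - c‖ + ‖d‖ + ‖e‖ := by gcongr; exact norm_sub_le _ _
    _ ≤ ‖a - b‖ + ‖c‖ + ‖d‖ + ‖e‖ := by gcongr; exact norm_sub_le _ _
    _ ≤ ‖a‖ + ‖b‖ + ‖c‖ + ‖d‖ + ‖e‖ := by gcongr; exact norm_sub_le _ _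

/-- For all `i ≥ 1`, the norms of the four gaps of the finite-precision
pipelined CG recurrences satisfy the coupled bounds of the paper. -/
theorem pipecg_coupled_norm_bounds
    {E : Type*} [NormedAddCommGroup E] [NormedSpace ℝ E]
    (A : E →L[ℝ] E) (b : E)
    (x r p s w u z q m δx δr δw δu δp δs δz δq f g h j : ℕ → E) (α β : ℕ → ℝ)
    (hx : ∀ i, x (i + 1) = x i + α i • p i + δx i)
    (hr : ∀ i, r (i + 1) = r i - α i • s i + δr i)
    (hw : ∀ i, w (i + 1) = w i - α i • z i + δw i)
    (hu : ∀ i, u (i + 1) = u i - α i • q i + δu i)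
    (hp : ∀ i, p (i + 1) = u (i + 1) + β (i + 1) • p i + δp (i + 1))
    (hs : ∀ i, s (i + 1) = w (i + 1) + β (i + 1) • s i + δs (i + 1))
    (hz : ∀ i, z (i + 1) = A (m (i + 1)) + β (i + 1) • z i + δz (i + 1))
    (hq : ∀ i, q (i + 1) = m (i + 1) + β (i + 1) • q i + δq (i + 1))
    (hf : ∀ i, f i = (b - A (x i)) - r i)
    (hg : ∀ i, g i = A (p i) - s i)
    (hh : ∀ i, h i = A (u i) - w i)
    (hj : ∀ i, j i = A (q i) - z i) :
    ∀ i,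
      ‖f (i + 2)‖ ≤ ‖f (i + 1)‖ + |α (i + 1) * β (i + 1)| * ‖g i‖ +
          |α (i + 1)| * ‖h (i + 1)‖ + ‖A (δx (i + 1)) + δr (i + 1)‖ +
          |α (i + 1)| * ‖A (δp (i + 1)) - δs (i + 1)‖ ∧
      ‖g (i + 1)‖ ≤ |β (i + 1)| * ‖g i‖ + ‖h (i + 1)‖ +
          ‖A (δp (i + 1)) - δs (i + 1)‖ ∧
      ‖h (i + 2)‖ ≤ ‖h (i + 1)‖ + |α (i + 1) * β (i + 1)| * ‖j i‖ +
          ‖A (δu (i + 1)) - δw (i + 1)‖ +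
          |α (i + 1)| * ‖A (δq (i + 1)) - δz (i + 1)‖ ∧
      ‖j (i + 1)‖ ≤ |β (i + 1)| * ‖j i‖ + ‖A (δq (i + 1)) - δz (i + 1)‖ := by
  intro i
  have eg : g (i + 1) = β (i + 1) • g i + h (i + 1) + (A (δp (i + 1)) - δs (i + 1)) := by
    simp only [hg, hh, hp i, hs i, map_add, map_smul]
    module
  have ej : j (i + 1) = β (i + 1) • j i + (A (δq (i + 1)) - δz (i + 1)) := by
    simp only [hj, hz i, hq i, map_add, map_smul]
    module
  have ef : f (i + 2) = f (i + 1) - (α (i + 1) * β (i + 1)) • g i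
      - α (i + 1) • h (i + 1) - (A (δx (i + 1)) + δr (i + 1))
      - α (i + 1) • (A (δp (i + 1)) - δs (i + 1)) := by
    have hg1 := hg (i + 1)
    rw [eg] at hg1
    simp only [hf, show i + 2 = (i + 1) + 1 from rfl, hx (i + 1), hr (i + 1),
      map_add, map_smul]
    rw [show A (p (i + 1)) = s (i + 1) + (β (i + 1) • g i + h (i + 1)
        + (A (δp (i + 1)) - δs (i + 1))) from eq_add_of_sub_eq' hg1.symm]
    module
  have eh : h (i + 2) = h (i + 1) - (α (i + 1) * β (i + 1)) • j i
      + (A (δu (i + 1)) - δw (i + 1))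
      - α (i + 1) • (A (δq (i + 1)) - δz (i + 1)) := by
    have hj1 := hj (i + 1)
    rw [ej] at hj1
    simp only [hh, show i + 2 = (i + 1) + 1 from rfl, hu (i + 1), hw (i + 1),
      map_add, map_sub, map_smul]
    rw [show A (q (i + 1)) = z (i + 1) + (β (i + 1) • j i
        + (A (δq (i + 1)) - δz (i + 1))) from eq_add_of_sub_eq' hj1.symm]
    module
  refine ⟨?_, ?_, ?_, ?_⟩
  · rw [ef]
    calc ‖_ - _ - _ - _ - _‖ ≤ _ := norm_sub₅_le _ _ _ _ _
      _ = _ := by simp [norm_smul, abs_mul]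
  · rw [eg]
    calc ‖_ + _ + _‖ ≤ ‖β (i+1) • g i‖ + ‖h (i+1)‖ + ‖A (δp (i+1)) - δs (i+1)‖ :=
          norm_add₃_le
      _ = _ := by simp [norm_smul, abs_mul]
  · rw [eh]
    calc ‖_ - _ + _ - _‖
        ≤ ‖h (i+1) - (α (i+1) * β (i+1)) • j i + (A (δu (i+1)) - δw (i+1))‖
          + ‖α (i+1) • (A (δq (i+1)) - δz (i+1))‖ := norm_sub_le _ _
      _ ≤ ‖h (i+1) - (α (i+1) * β (i+1)) • j i‖ + ‖A (δu (i+1)) - δw (i+1)‖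
          + ‖α (i+1) • (A (δq (i+1)) - δz (i+1))‖ := by
            gcongr; exact norm_add_le _ _
      _ ≤ ‖h (i+1)‖ + ‖(α (i+1) * β (i+1)) • j i‖ + ‖A (δu (i+1)) - δw (i+1)‖
          + ‖α (i+1) • (A (δq (i+1)) - δz (i+1))‖ := by
            gcongr; exact norm_sub_le _ _
      _ = _ := by simp [norm_smul, abs_mul]
  · rw [ej]
    calc ‖_ + _‖ ≤ ‖β (i+1) • j i‖ + ‖A (δq (i+1)) - δz (i+1)‖ := norm_add_le _ _
      _ = _ := by simp [norm_smul, abs_mul]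
end

section
/- For all l ≥ 0, the gap j_l of the finite-precision pipelined CG recurrences admits the closed form j_l = (Π_{m=1}^{l} β_m)·j_0 + Σ_{m=1}^{l} (Π_{n=m+1}^{l} β_n)·(A δ^q_m − δ^z_m), where empty products equal 1 and empty sums equal 0. -/
/-- For all `l ≥ 0`, the gap `j` of the finite-precision pipelined CG
recurrences admits the closed form
`j l = (Π_{m=1}^{l} β m) • j 0 + Σ_{m=1}^{l} (Π_{n=m+1}^{l} β n) • (A (δq m) - δz m)`. -/
theorem pipecg_gap_j_closed_form
    {E : Type*} [NormedAddCommGroup E] [NormedSpace ℝ E]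
    (A : E →L[ℝ] E)
    (z q m δz δq j : ℕ → E) (β : ℕ → ℝ)
    (hz : ∀ i, z (i + 1) = A (m (i + 1)) + β (i + 1) • z i + δz (i + 1))
    (hq : ∀ i, q (i + 1) = m (i + 1) + β (i + 1) • q i + δq (i + 1))
    (hj : ∀ i, j i = A (q i) - z i) :
    ∀ l, j l = (∏ k ∈ Finset.Icc 1 l, β k) • j 0 +
      ∑ k ∈ Finset.Icc 1 l, (∏ n ∈ Finset.Icc (k + 1) l, β n) • (A (δq k) - δz k) := by
  have key : ∀ i, j (i + 1) = β (i + 1) • j i + (A (δq (i + 1)) - δz (i + 1)) := by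
    intro i
    rw [hj, hj, hz, hq]
    simp only [map_add, map_smul]
    module
  intro l
  induction l with
  | zero => simp
  | succ l ih =>
    rw [key, ih]
    have h1 : Finset.Icc 1 (l + 1) = insert (l + 1) (Finset.Icc 1 l) := by
      rw [← Finset.insert_Icc_right_eq_Icc_add_one (by omega)]
    have h2 : ∀ k ∈ Finset.Icc 1 l,
        (∏ n ∈ Finset.Icc (k + 1) (l + 1), β n)
          = β (l + 1) * ∏ n ∈ Finset.Icc (k + 1) l, β n := by
      intro k hk
      simp only [Finset.mem_Icc] at hk
      rw [← Finset.insert_Icc_right_eq_Icc_add_one (by omega), Finset.prod_insert (by simp)]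
    have h3 : ∀ k ∈ Finset.Icc 1 l,
        (∏ n ∈ Finset.Icc (k + 1) (l + 1), β n) • (A (δq k) - δz k)
          = β (l + 1) • ((∏ n ∈ Finset.Icc (k + 1) l, β n) • (A (δq k) - δz k)) := by
      intro k hk
      rw [h2 k hk, smul_smul]
    rw [h1, Finset.prod_insert (by simp), Finset.sum_insert (by simp),
      Finset.sum_congr rfl h3, ← Finset.smul_sum, smul_add, smul_smul]
    simp
    abel
end

section
/- For all k ≥ 0, the gap h_k of the finite-precision pipelined CG recurrences admits the closed form h_k = h_0 − Σ_{l=0}^{k−1} α_l j_l + Σ_{l=0}^{k−1} (A δ^u_l − δ^w_l), where empty sums equal 0. -/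
/-- For all `k ≥ 0`, the gap `h` of the finite-precision pipelined CG
recurrences admits the closed form
`h k = h 0 - Σ_{l=0}^{k-1} α l • j l + Σ_{l=0}^{k-1} (A (δu l) - δw l)`. -/
theorem pipecg_gap_h_closed_form
    {E : Type*} [NormedAddCommGroup E] [NormedSpace ℝ E]
    (A : E →L[ℝ] E)
    (w u z q δw δu h j : ℕ → E) (α : ℕ → ℝ)
    (hw : ∀ i, w (i + 1) = w i - α i • z i + δw i)
    (hu : ∀ i, u (i + 1) = u i - α i • q i + δu i)
    (hh : ∀ i, h i = A (u i) - w i)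
    (hj : ∀ i, j i = A (q i) - z i) :
    ∀ k, h k = h 0 - (∑ l ∈ Finset.range k, α l • j l) +
      ∑ l ∈ Finset.range k, (A (δu l) - δw l) := by
  intro k
  induction k with
  | zero => simp
  | succ n ih =>
    rw [Finset.sum_range_succ, Finset.sum_range_succ, hh, hu, hw]
    have e : A (u n - α n • q n + δu n) - (w n - α n • z n + δw n)
        = (A (u n) - w n) - α n • (A (q n) - z n) + (A (δu n) - δw n) := by
      simp only [map_add, map_sub, map_smul]; module
    rw [e, ← hh, ← hj, ih]
    abel
end

section
/- For all j ≥ 0, the gap g_j of the finite-precision pipelined CG recurrences admits the closed form g_j = (Π_{k=1}^{j} β_k)·g_0 + Σ_{k=1}^{j} (Π_{l=k+1}^{j} β_l)·(A δ^p_k − δ^s_k) + Σ_{k=1}^{j} (Π_{l=k+1}^{j} β_l)·h_k, where empty products equal 1 and empty sums equal 0; consequently, for all i ≥ 0, the residual gap satisfies f_{i+1} = f_0 − Σ_{j=0}^{i} α_j g_j − Σ_{j=0}^{i} (A δ^x_j + δ^r_j). -/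
/-- For all `j ≥ 0`, the gap `g` of the finite-precision pipelined CG
recurrences admits the closed form
`g j = (Π_{k=1}^{j} β k) • g 0 + Σ_{k=1}^{j} (Π_{l=k+1}^{j} β l) • (A (δp k) - δs k)
  + Σ_{k=1}^{j} (Π_{l=k+1}^{j} β l) • h k`;
consequently, for all `i ≥ 0`, the residual gap satisfies
`f (i+1) = f 0 - Σ_{j=0}^{i} α j • g j - Σ_{j=0}^{i} (A (δx j) + δr j)`. -/
theorem pipecg_gap_g_and_f_closed_form
    {E : Type*} [NormedAddCommGroup E] [NormedSpace ℝ E]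
    (A : E →L[ℝ] E) (b : E)
    (x r p s w u δx δr δp δs f g h : ℕ → E) (α β : ℕ → ℝ)
    (hx : ∀ i, x (i + 1) = x i + α i • p i + δx i)
    (hr : ∀ i, r (i + 1) = r i - α i • s i + δr i)
    (hp : ∀ i, p (i + 1) = u (i + 1) + β (i + 1) • p i + δp (i + 1))
    (hs : ∀ i, s (i + 1) = w (i + 1) + β (i + 1) • s i + δs (i + 1))
    (hf : ∀ i, f i = (b - A (x i)) - r i)
    (hg : ∀ i, g i = A (p i) - s i)
    (hh : ∀ i, h i = A (u i) - w i) :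
    (∀ n, g n = (∏ k ∈ Finset.Icc 1 n, β k) • g 0 +
        (∑ k ∈ Finset.Icc 1 n, (∏ l ∈ Finset.Icc (k + 1) n, β l) • (A (δp k) - δs k)) +
        ∑ k ∈ Finset.Icc 1 n, (∏ l ∈ Finset.Icc (k + 1) n, β l) • h k) ∧
      ∀ i, f (i + 1) = f 0 - (∑ n ∈ Finset.range (i + 1), α n • g n) -
        ∑ n ∈ Finset.range (i + 1), (A (δx n) + δr n) := by
  have gstep : ∀ n, g (n + 1) = β (n + 1) • g n + (A (δp (n + 1)) - δs (n + 1)) + h (n + 1) := by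
    intro n
    rw [hg, hg, hh, hp, hs]
    simp only [map_add, map_smul]
    module
  have fstep : ∀ i, f (i + 1) = f i - α i • g i - (A (δx i) + δr i) := by
    intro i
    rw [hf, hf, hg, hx, hr]
    simp only [map_add, map_smul]
    module
  have hG : ∀ n, g n = (∏ k ∈ Finset.Icc 1 n, β k) • g 0 +
      (∑ k ∈ Finset.Icc 1 n, (∏ l ∈ Finset.Icc (k + 1) n, β l) • (A (δp k) - δs k)) +
      ∑ k ∈ Finset.Icc 1 n, (∏ l ∈ Finset.Icc (k + 1) n, β l) • h k := by
    intro n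
    induction n with
    | zero => simp
    | succ n ih =>
      have h1 : (1 : ℕ) ≤ n + 1 := Nat.succ_le_succ (Nat.zero_le n)
      rw [gstep, ih]
      rw [Finset.prod_Icc_succ_top h1, Finset.sum_Icc_succ_top h1, Finset.sum_Icc_succ_top h1]
      have hemp : Finset.Icc (n + 1 + 1) (n + 1) = ∅ := by
        rw [Finset.Icc_eq_empty_iff]; omega
      rw [hemp]
      have hcongr : ∀ (v : ℕ → E),
          (∑ k ∈ Finset.Icc 1 n, (∏ l ∈ Finset.Icc (k + 1) (n + 1), β l) • v k) =
          ∑ k ∈ Finset.Icc 1 n, β (n + 1) • ((∏ l ∈ Finset.Icc (k + 1) n, β l) • v k) := by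
        intro v
        refine Finset.sum_congr rfl fun k hk => ?_
        have hk' : k + 1 ≤ n + 1 := by
          have := (Finset.mem_Icc.mp hk).2; omega
        rw [Finset.prod_Icc_succ_top hk', smul_smul, mul_comm]
      rw [hcongr, hcongr, ← Finset.smul_sum, ← Finset.smul_sum]
      simp only [Finset.prod_empty, one_smul, smul_add, mul_smul]
      module
  refine ⟨hG, fun i => ?_⟩
  induction i with
  | zero => simp [fstep 0]
  | succ i ih =>
    rw [fstep, ih, Finset.sum_range_succ _ (i + 1), Finset.sum_range_succ _ (i + 1)]
    abel
end

section
/- For all i ≥ 1, the preconditioned gaps of the finite-precision pipelined CG recurrences satisfy ℓ_i = β_i ℓ_{i−1} + M δ^s_i − δ^q_i and k_{i+1} = k_i − α_i ℓ_i + M δ^r_i − δ^u_i. -/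
/-- For all `i ≥ 1`, the preconditioned gaps of the finite-precision pipelined
CG recurrences satisfy `ℓ i = β i • ℓ (i-1) + M (δs i) - δq i` and
`k (i+1) = k i - α i • ℓ i + M (δr i) - δu i`. -/
theorem pipecg_preconditioned_gap_recursion
    {E : Type*} [NormedAddCommGroup E] [NormedSpace ℝ E]
    (M : E →L[ℝ] E)
    (r s w u q m δr δu δs δq k l : ℕ → E) (α β : ℕ → ℝ)
    (hr : ∀ i, r (i + 1) = r i - α i • s i + δr i)
    (hu : ∀ i, u (i + 1) = u i - α i • q i + δu i)
    (hs : ∀ i, s (i + 1) = w (i + 1) + β (i + 1) • s i + δs (i + 1))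
    (hq : ∀ i, q (i + 1) = m (i + 1) + β (i + 1) • q i + δq (i + 1))
    (hm : ∀ i, m i = M (w i))
    (hk : ∀ i, k i = M (r i) - u i)
    (hl : ∀ i, l i = M (s i) - q i) :
    ∀ i, l (i + 1) = β (i + 1) • l i + M (δs (i + 1)) - δq (i + 1) ∧
      k (i + 2) = k (i + 1) - α (i + 1) • l (i + 1) + M (δr (i + 1)) - δu (i + 1) := by
  intro i
  constructor
  · simp only [hl, hs, hq, hm, map_add, map_smul, map_sub, smul_sub, smul_add]
    abel
  · simp only [hk, hl, hr, hu, map_add, map_smul, map_sub, smul_sub, smul_add]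
    abel
end
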